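/- Let Y have Student's t(λ) density with λ > 0. Then E[Y²/(1+Y²/λ)²] = λ²/((λ+1)(λ+3)), E[Y²/(1+Y²/λ)] = λ/(λ+1), and E[Y⁴/(1+Y²/λ)²] = 3λ²/((λ+1)(λ+3)). -/

import Mathlib

open MeasureTheory Real Set


lemma betaInt (u v : ℝ) (hu : 0 < u) (hv : 0 < v) :
    IntegrableOn (fun x : ℝ => x ^ (u - 1) * (1 - x) ^ (v - 1)) (Ioo 0 1) ∧
    ∫ x in Ioo (0:ℝ) 1, x ^ (u - 1) * (1 - x) ^ (v - 1) =
      Real.Gamma u * Real.Gamma v / Real.Gamma (u + v) := by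
  have hre : ∀ x ∈ Ioo (0:ℝ) 1,
      ((x:ℂ) ^ ((u:ℂ) - 1) * (1 - (x:ℂ)) ^ ((v:ℂ) - 1)) =
        ((x ^ (u - 1) * (1 - x) ^ (v - 1) : ℝ) : ℂ) := by
    intro x hx
    rw [Complex.ofReal_mul, Complex.ofReal_cpow hx.1.le, Complex.ofReal_cpow (by linarith [hx.2])]
    push_cast
    ring
  have hconv := Complex.betaIntegral_convergent (u := (u:ℂ)) (v := (v:ℂ)) (by simpa) (by simpa)
  have hIoo : IntegrableOn (fun x : ℝ => (x:ℂ) ^ ((u:ℂ) - 1) * (1 - (x:ℂ)) ^ ((v:ℂ) - 1))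
      (Ioo 0 1) := by
    have := hconv.1
    rw [intervalIntegrable_iff_integrableOn_Ioo_of_le (by norm_num)] at hconv
    exact hconv
  constructor
  · have : IntegrableOn (fun x : ℝ =>
        ((x:ℂ) ^ ((u:ℂ) - 1) * (1 - (x:ℂ)) ^ ((v:ℂ) - 1)).re) (Ioo 0 1) := hIoo.re
    refine this.congr_fun (fun x hx => ?_) measurableSet_Ioo
    dsimp only
    rw [hre x hx, Complex.ofReal_re]
  · have hbeta := Complex.Gamma_mul_Gamma_eq_betaIntegral
      (s := (u:ℂ)) (t := (v:ℂ)) (by simpa) (by simpa)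
    have hBI : Complex.betaIntegral u v = ((∫ x in Ioo (0:ℝ) 1,
        x ^ (u - 1) * (1 - x) ^ (v - 1) : ℝ) : ℂ) := by
      rw [Complex.betaIntegral, intervalIntegral.integral_of_le (by norm_num : (0:ℝ) ≤ 1)]
      rw [integral_Ioc_eq_integral_Ioo]
      rw [setIntegral_congr_fun measurableSet_Ioo hre]
      exact integral_ofReal (𝕜 := ℂ) (μ := volume.restrict (Ioo 0 1)) (f := fun x : ℝ => x ^ (u - 1) * (1 - x) ^ (v - 1))
    rw [hBI] at hbeta
    have hGuv : Real.Gamma (u + v) ≠ 0 := (Real.Gamma_pos_of_pos (by linarith)).ne'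
    have : ((Real.Gamma u * Real.Gamma v : ℝ) : ℂ) =
        ((Real.Gamma (u+v) * ∫ x in Ioo (0:ℝ) 1, x ^ (u - 1) * (1 - x) ^ (v - 1) : ℝ) : ℂ) := by
      push_cast
      rw [← Complex.Gamma_ofReal, ← Complex.Gamma_ofReal, ← Complex.Gamma_ofReal] at *
      push_cast at hbeta ⊢
      rw [hbeta]
    have h2 := Complex.ofReal_injective this
    field_simp
    linarith [h2]

lemma Jint (lam c : ℝ) (hlam : 0 < lam) (hc : 1/2 < c) :
    Integrable (fun y : ℝ => (1 + y ^ 2 / lam) ^ (-c)) ∧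
    ∫ y : ℝ, (1 + y ^ 2 / lam) ^ (-c) =
      Real.sqrt (lam * π) * Real.Gamma (c - 1/2) / Real.Gamma c := by
  set φ : ℝ → ℝ := fun x => Real.sqrt (lam * x / (1 - x)) with hφ
  set φ' : ℝ → ℝ := fun x => (lam / (1 - x) ^ 2) / (2 * Real.sqrt (lam * x / (1 - x))) with hφ'
  set g : ℝ → ℝ := fun y => (1 + y ^ 2 / lam) ^ (-c) with hg
  have hderiv : ∀ x ∈ Ioo (0:ℝ) 1, HasDerivWithinAt φ (φ' x) (Ioo 0 1) x := by
    intro x hx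
    have h1x : (0:ℝ) < 1 - x := by linarith [hx.2]
    have hpos : 0 < lam * x / (1 - x) := div_pos (mul_pos hlam hx.1) h1x
    have hinner : HasDerivAt (fun x : ℝ => lam * x / (1 - x)) (lam / (1 - x) ^ 2) x := by
      have := (hasDerivAt_id x).const_mul lam |>.div
        ((hasDerivAt_id x).const_sub 1) h1x.ne'
      refine this.congr_deriv ?_
      simp only [id_eq]
      ring
    have := (Real.hasDerivAt_sqrt hpos.ne').comp x hinner
    exact this.hasDerivWithinAt.congr_deriv (by rw [hφ']; ring)
  have hinj : InjOn φ (Ioo 0 1) := by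
    intro a ha b hb hab
    have h1a : (0:ℝ) < 1 - a := by linarith [ha.2]
    have h1b : (0:ℝ) < 1 - b := by linarith [hb.2]
    have hpa : 0 ≤ lam * a / (1 - a) := (div_pos (mul_pos hlam ha.1) h1a).le
    have hpb : 0 ≤ lam * b / (1 - b) := (div_pos (mul_pos hlam hb.1) h1b).le
    have : lam * a / (1 - a) = lam * b / (1 - b) := by
      have := congrArg (fun t => t ^ 2) hab
      simpa [hφ, Real.sq_sqrt hpa, Real.sq_sqrt hpb] using this
    field_simp at this
    nlinarith [hlam]
  have himg : φ '' Ioo 0 1 = Ioi 0 := by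
    apply Subset.antisymm
    · rintro - ⟨x, hx, rfl⟩
      have h1x : (0:ℝ) < 1 - x := by linarith [hx.2]
      exact Real.sqrt_pos.mpr (div_pos (mul_pos hlam hx.1) h1x)
    · intro y hy
      have hy' : (0:ℝ) < y := hy
      have hd : (0:ℝ) < lam + y ^ 2 := by positivity
      refine ⟨y^2 / (lam + y^2), ⟨by positivity, ?_⟩, ?_⟩
      · rw [div_lt_one hd]; linarith
      · show Real.sqrt (lam * (y^2 / (lam + y^2)) / (1 - y^2 / (lam + y^2))) = y
        have h2 : lam * (y^2 / (lam + y^2)) / (1 - y^2 / (lam + y^2)) = y ^ 2 := by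
          rw [show (1 : ℝ) - y^2/(lam+y^2) = lam / (lam + y^2) by field_simp; ring]
          field_simp
        rw [h2, Real.sqrt_sq hy'.le]
  have hkey : ∀ x ∈ Ioo (0:ℝ) 1,
      |φ' x| • g (φ x) =
        (Real.sqrt lam / 2) * (x ^ ((1:ℝ)/2 - 1) * (1 - x) ^ ((c - 1/2) - 1)) := by
    intro x hx
    have h1x : (0:ℝ) < 1 - x := by linarith [hx.2]
    have hxpos := hx.1
    have hpos : 0 < lam * x / (1 - x) := div_pos (mul_pos hlam hxpos) h1x
    have hsq : (φ x) ^ 2 = lam * x / (1 - x) := Real.sq_sqrt hpos.le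
    have hA : 1 + (φ x) ^ 2 / lam = (1 - x)⁻¹ := by
      rw [hsq]; field_simp; ring
    have hAc : g (φ x) = (1 - x) ^ c := by
      rw [hg]
      simp only
      rw [hA, ← Real.rpow_neg_one (1 - x), ← Real.rpow_mul h1x.le]
      norm_num
    have habs : |φ' x| = φ' x := abs_of_nonneg (by
      rw [hφ']
      have := Real.sqrt_nonneg (lam * x / (1 - x))
      positivity)
    have hs : (0:ℝ) < Real.sqrt x := Real.sqrt_pos.mpr hxpos
    have ht : (0:ℝ) < Real.sqrt (1 - x) := Real.sqrt_pos.mpr h1x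
    have hL : (0:ℝ) < Real.sqrt lam := Real.sqrt_pos.mpr hlam
    have hsplit : Real.sqrt (lam * x / (1 - x)) =
        Real.sqrt lam * Real.sqrt x / Real.sqrt (1 - x) := by
      rw [Real.sqrt_div (by positivity), Real.sqrt_mul hlam.le]
    have hx12 : x ^ ((1:ℝ)/2 - 1) = Real.sqrt x / x := by
      rw [Real.rpow_sub hxpos, Real.rpow_one, ← Real.sqrt_eq_rpow]
    have h32 : (1 - x) ^ ((c - 1/2) - 1 : ℝ) = (1 - x) ^ c / ((1 - x) * Real.sqrt (1 - x)) := by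
      rw [show ((c - 1/2) - 1 : ℝ) = c - (1 + 1/2) by ring, Real.rpow_sub h1x,
        Real.rpow_add h1x, Real.rpow_one, ← Real.sqrt_eq_rpow]
    rw [smul_eq_mul, habs, hAc, hx12, h32]
    simp only [hφ']
    rw [hsplit]
    have e1 : Real.sqrt x * Real.sqrt x = x := Real.mul_self_sqrt hxpos.le
    have e2 : Real.sqrt (1 - x) * Real.sqrt (1 - x) = 1 - x := Real.mul_self_sqrt h1x.le
    have e3 : Real.sqrt lam * Real.sqrt lam = lam := Real.mul_self_sqrt hlam.le
    field_simp
    linear_combination (lam*x)*e2 - (1-x)*(Real.sqrt lam)^2*e1 - (1-x)*x*e3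
  obtain ⟨hbint, hbval⟩ := betaInt (1/2) (c - 1/2) (by norm_num) (by linarith)
  have hchg := integral_image_eq_integral_abs_deriv_smul measurableSet_Ioo hderiv hinj g
  rw [himg, setIntegral_congr_fun measurableSet_Ioo hkey] at hchg
  have hIoi_val : ∫ y in Ioi (0:ℝ), g y =
      (Real.sqrt lam / 2) * (Real.Gamma (1/2) * Real.Gamma (c - 1/2) /
        Real.Gamma (1/2 + (c - 1/2))) := by
    rw [hchg, integral_const_mul, hbval]
  have hint : IntegrableOn g (Ioi 0) := by
    rw [← himg, integrableOn_image_iff_integrableOn_abs_deriv_smul measurableSet_Ioo hderiv hinj]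
    have hb2 : IntegrableOn (fun x : ℝ => (Real.sqrt lam / 2) *
        (x ^ ((1:ℝ)/2 - 1) * (1 - x) ^ ((c - 1/2) - 1))) (Ioo 0 1) := hbint.const_mul _
    exact IntegrableOn.congr_fun hb2 (fun x hx => (hkey x hx).symm) measurableSet_Ioo
  have heven : ∀ y : ℝ, g (-y) = g y := by intro y; simp [hg, neg_sq]
  have hIic : IntegrableOn g (Iic 0) := by
    rw [← Measure.map_neg_eq_self (volume : Measure ℝ)]
    have m : MeasurableEmbedding fun x : ℝ => -x := (Homeomorph.neg ℝ).measurableEmbedding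
    rw [m.integrableOn_map_iff]
    simp_rw [Function.comp_def, neg_preimage, neg_Iic, neg_zero]
    have h2 : (fun x : ℝ => g (-x)) = g := funext heven
    rw [h2]
    exact (integrableOn_Ici_iff_integrableOn_Ioi (f := g)).mpr hint
  have hInt : Integrable g := by
    rw [← integrableOn_univ, ← Iic_union_Ioi (a := (0:ℝ))]
    exact hIic.union hint
  refine ⟨hInt, ?_⟩
  have habs : (fun y : ℝ => g |y|) = g := by funext y; simp [hg, sq_abs]
  have : (∫ y : ℝ, g y) = 2 * ∫ y in Ioi (0:ℝ), g y := by
    rw [← integral_comp_abs (f := g), habs]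
  rw [this, hIoi_val, show (1/2 + (c - 1/2) : ℝ) = c by ring, Real.Gamma_one_half_eq,
    Real.sqrt_mul hlam.le]
  ring


/-- The Student `t(λ)` density normalizing constant `C_λ = Γ((λ+1)/2)/(√(λπ)Γ(λ/2))`. -/
noncomputable def studentConst (lam : ℝ) : ℝ :=
  Real.Gamma ((lam + 1) / 2) / (Real.sqrt (lam * π) * Real.Gamma (lam / 2))

/-- The Student `t(λ)` density `y ↦ C_λ (1 + y²/λ)^{-(λ+1)/2}`. -/
noncomputable def studentDens (lam y : ℝ) : ℝ :=
  studentConst lam * (1 + y ^ 2 / lam) ^ (-(lam + 1) / 2)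

/-- For `Y ∼ t(λ)` with `λ > 0`: `E[Y²/(1+Y²/λ)²] = λ²/((λ+1)(λ+3))`,
`E[Y²/(1+Y²/λ)] = λ/(λ+1)`, and `E[Y⁴/(1+Y²/λ)²] = 3λ²/((λ+1)(λ+3))`. -/
theorem student_ratio_moments (lam : ℝ) (hlam : 0 < lam) :
    (∫ y : ℝ, y ^ 2 / (1 + y ^ 2 / lam) ^ 2 * studentDens lam y) =
      lam ^ 2 / ((lam + 1) * (lam + 3)) ∧
    (∫ y : ℝ, y ^ 2 / (1 + y ^ 2 / lam) * studentDens lam y) = lam / (lam + 1) ∧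
    (∫ y : ℝ, y ^ 4 / (1 + y ^ 2 / lam) ^ 2 * studentDens lam y) =
      3 * lam ^ 2 / ((lam + 1) * (lam + 3)) := by
  have hA : ∀ y : ℝ, 0 < 1 + y ^ 2 / lam := fun y => by positivity
  obtain ⟨hI0, hV0⟩ := Jint lam ((lam+1)/2) hlam (by linarith)
  obtain ⟨hI1, hV1⟩ := Jint lam ((lam+3)/2) hlam (by linarith)
  obtain ⟨hI2, hV2⟩ := Jint lam ((lam+5)/2) hlam (by linarith)
  have hane : lam / 2 ≠ 0 := by positivity
  have ha1ne : lam / 2 + 1 ≠ 0 := by positivity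
  have hbne : (lam + 1) / 2 ≠ 0 := by positivity
  have hb1ne : (lam + 1) / 2 + 1 ≠ 0 := by positivity
  have hS : (0:ℝ) < Real.sqrt (lam * π) := Real.sqrt_pos.mpr (by positivity)
  have hGa : (0:ℝ) < Real.Gamma (lam/2) := Real.Gamma_pos_of_pos (by positivity)
  have hGb : (0:ℝ) < Real.Gamma ((lam+1)/2) := Real.Gamma_pos_of_pos (by positivity)
  have h1 : (lam:ℝ) + 1 ≠ 0 := by positivity
  have h3 : (lam:ℝ) + 3 ≠ 0 := by positivity
  refine ⟨?_, ?_, ?_⟩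
  · have key : (∫ y : ℝ, y ^ 2 / (1 + y ^ 2 / lam) ^ 2 * studentDens lam y) =
        (studentConst lam * lam) * ((∫ y : ℝ, (1 + y ^ 2 / lam) ^ (-((lam+3)/2))) -
          ∫ y : ℝ, (1 + y ^ 2 / lam) ^ (-((lam+5)/2))) := by
      rw [← integral_sub hI1 hI2, ← integral_const_mul]
      congr 1; funext y
      have h := hA y
      rw [studentDens, show -(lam+1)/2 = -((lam+1)/2) by ring,
        show -((lam+3)/2) = -((lam+1)/2) - 1 by ring,
        show -((lam+5)/2) = (-((lam+1)/2) - 1) - 1 by ring]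
      simp only [Real.rpow_sub h, Real.rpow_one]
      have hy2 : y ^ 2 = lam * (1 + y ^ 2 / lam) - lam := by field_simp; ring
      generalize hP : (1 + y ^ 2 / lam) ^ (-((lam+1)/2)) = P
      generalize hAg : 1 + y ^ 2 / lam = A at h hy2 ⊢
      rw [hy2]
      field_simp
    rw [key, hV1, hV2, studentConst]
    rw [show (lam+3)/2 - 1/2 = lam/2 + 1 by ring, show (lam+3)/2 = (lam+1)/2 + 1 by ring,
      Real.Gamma_add_one hane, Real.Gamma_add_one hbne]
    rw [show (lam+5)/2 - 1/2 = lam/2 + 1 + 1 by ring,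
      show (lam+5)/2 = (lam+1)/2 + 1 + 1 by ring,
      Real.Gamma_add_one ha1ne, Real.Gamma_add_one hb1ne,
      Real.Gamma_add_one hane, Real.Gamma_add_one hbne]
    field_simp
    try ring
  · have key : (∫ y : ℝ, y ^ 2 / (1 + y ^ 2 / lam) * studentDens lam y) =
        (studentConst lam * lam) * ((∫ y : ℝ, (1 + y ^ 2 / lam) ^ (-((lam+1)/2))) -
          ∫ y : ℝ, (1 + y ^ 2 / lam) ^ (-((lam+3)/2))) := by
      rw [← integral_sub hI0 hI1, ← integral_const_mul]
      congr 1; funext y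
      have h := hA y
      rw [studentDens, show -(lam+1)/2 = -((lam+1)/2) by ring,
        show -((lam+3)/2) = -((lam+1)/2) - 1 by ring]
      simp only [Real.rpow_sub h, Real.rpow_one]
      have hy2 : y ^ 2 = lam * (1 + y ^ 2 / lam) - lam := by field_simp; ring
      generalize hP : (1 + y ^ 2 / lam) ^ (-((lam+1)/2)) = P
      generalize hAg : 1 + y ^ 2 / lam = A at h hy2 ⊢
      rw [hy2]
      field_simp
    rw [key, hV0, hV1, studentConst]
    rw [show (lam+1)/2 - 1/2 = lam/2 by ring]
    rw [show (lam+3)/2 - 1/2 = lam/2 + 1 by ring, show (lam+3)/2 = (lam+1)/2 + 1 by ring,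
      Real.Gamma_add_one hane, Real.Gamma_add_one hbne]
    field_simp
    try ring
  · have key : (∫ y : ℝ, y ^ 4 / (1 + y ^ 2 / lam) ^ 2 * studentDens lam y) =
        (studentConst lam * lam ^ 2) * (((∫ y : ℝ, (1 + y ^ 2 / lam) ^ (-((lam+1)/2))) -
          2 * ∫ y : ℝ, (1 + y ^ 2 / lam) ^ (-((lam+3)/2))) +
          ∫ y : ℝ, (1 + y ^ 2 / lam) ^ (-((lam+5)/2))) := by
      have h2i : Integrable (fun x : ℝ => 2 * (1 + x ^ 2 / lam) ^ (-((lam+3)/2))) :=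
        hI1.const_mul 2
      have hcomb : Integrable (fun y : ℝ => (1 + y ^ 2 / lam) ^ (-((lam+1)/2)) -
          2 * (1 + y ^ 2 / lam) ^ (-((lam+3)/2))) := hI0.sub h2i
      rw [← integral_const_mul (2:ℝ), ← integral_sub hI0 h2i,
        ← integral_add hcomb hI2, ← integral_const_mul]
      congr 1; funext y
      have h := hA y
      rw [studentDens, show -(lam+1)/2 = -((lam+1)/2) by ring,
        show -((lam+3)/2) = -((lam+1)/2) - 1 by ring,
        show -((lam+5)/2) = (-((lam+1)/2) - 1) - 1 by ring,
        show (y:ℝ) ^ 4 = (y ^ 2) ^ 2 by ring]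
      simp only [Real.rpow_sub h, Real.rpow_one]
      have hy2 : y ^ 2 = lam * (1 + y ^ 2 / lam) - lam := by field_simp; ring
      generalize hP : (1 + y ^ 2 / lam) ^ (-((lam+1)/2)) = P
      generalize hAg : 1 + y ^ 2 / lam = A at h hy2 ⊢
      rw [hy2]
      field_simp
      ring
    rw [key, hV0, hV1, hV2, studentConst]
    rw [show (lam+1)/2 - 1/2 = lam/2 by ring]
    rw [show (lam+3)/2 - 1/2 = lam/2 + 1 by ring, show (lam+3)/2 = (lam+1)/2 + 1 by ring,
      Real.Gamma_add_one hane, Real.Gamma_add_one hbne]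
    rw [show (lam+5)/2 - 1/2 = lam/2 + 1 + 1 by ring,
      show (lam+5)/2 = (lam+1)/2 + 1 + 1 by ring,
      Real.Gamma_add_one ha1ne, Real.Gamma_add_one hb1ne,
      Real.Gamma_add_one hane, Real.Gamma_add_one hbne]
    field_simp
    try ring
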